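/- Let p be a prime and let S^{(p)}(n1,n2,m1,m2;p,p) be the GL(3) Kloosterman sum with level-p condition, i.e. the sum over B1,C1 mod p and B2,C2 mod p with D1=D2=p, satisfying pC2+B1B2+pC1 ≡ 0 mod p^2, gcd(Bj,Cj,p)=1, p | B1, of e((n1 B1 + m1(Y1 p − Z1 B2))/p + (n2 B2 + m2(Y2 p − Z2 B1))/p) where Yj Bj + Zj Cj ≡ 1 mod p. Then S^{(p)}(n1,n2,m1,m2;p,p) = p−1 + r_p(m1) r_p(n2), where r_p denotes the Ramanujan sum mod p. In particular it equals p(p−1) if p | m1 and p | n2, equals p if p ∤ m1 n2, and equals 0 otherwise. -/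

import Mathlib

open Finset

/-- `e(x) = exp(2πix)`. -/
noncomputable def eChar (x : ℝ) : ℂ := Complex.exp (2 * Real.pi * Complex.I * x)

/-- Ramanujan sum `r_q(n) = Σ_{a mod q, (a,q)=1} e(an/q)`. -/
noncomputable def ramanujanSum (q : ℕ) (n : ℤ) : ℂ :=
  ∑ a ∈ Finset.range q, if Nat.gcd a q = 1 then eChar ((a : ℝ) * (n : ℝ) / q) else 0

/-- The GL(3) Kloosterman sum `S^{(N)}(n1,n2,m1,m2;D1,D2)`.  The summand is independent of
the choice of `(Y_j, Z_j)` with `Y_j B_j + Z_j C_j ≡ 1 mod D_j`; since there are exactly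
`D_j` such pairs modulo `D_j`, we sum over all of them and divide by `D1 * D2`. -/
noncomputable def Kloosterman3 (N : ℕ) (n1 n2 m1 m2 : ℤ) (D1 D2 : ℕ) : ℂ :=
  (1 / ((D1 : ℂ) * (D2 : ℂ))) *
  ∑ B1 ∈ range D1, ∑ C1 ∈ range D1, ∑ Y1 ∈ range D1, ∑ Z1 ∈ range D1,
  ∑ B2 ∈ range D2, ∑ C2 ∈ range D2, ∑ Y2 ∈ range D2, ∑ Z2 ∈ range D2,
    if ((D1 : ℤ) * C2 + (B1 : ℤ) * B2 + (D2 : ℤ) * C1) % ((D1 : ℤ) * D2) = 0 ∧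
       Nat.gcd (Nat.gcd B1 C1) D1 = 1 ∧ Nat.gcd (Nat.gcd B2 C2) D2 = 1 ∧
       (N : ℤ) ∣ (B1 : ℤ) ∧
       ((Y1 : ℤ) * B1 + (Z1 : ℤ) * C1) % (D1 : ℤ) = 1 % (D1 : ℤ) ∧
       ((Y2 : ℤ) * B2 + (Z2 : ℤ) * C2) % (D2 : ℤ) = 1 % (D2 : ℤ) then
      eChar (((n1 * B1 + m1 * ((Y1 : ℤ) * D2 - (Z1 : ℤ) * B2) : ℤ) : ℝ) / D1 +
             ((n2 * B2 + m2 * ((Y2 : ℤ) * D1 - (Z2 : ℤ) * B1) : ℤ) : ℝ) / D2)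
    else 0


noncomputable def ep (p : ℕ) (a : ℤ) : ℂ := eChar ((a : ℝ) / p)

lemma ep_zero (p : ℕ) : ep p 0 = 1 := by
  simp [ep, eChar]

lemma ep_add (p : ℕ) (a b : ℤ) : ep p (a + b) = ep p a * ep p b := by
  unfold ep eChar
  rw [← Complex.exp_add]
  congr 1
  push_cast
  ring

lemma ep_pmul (p : ℕ) (hp : 0 < p) (k : ℤ) : ep p ((p : ℤ) * k) = 1 := by
  unfold ep eChar
  have h : ((((p : ℤ) * k : ℤ) : ℝ) / p : ℝ) = (k : ℝ) := by
    field_simp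
    simp
  rw [h]
  have : (2 * (Real.pi:ℂ) * Complex.I * ((k:ℝ):ℂ)) = (k:ℤ) * (2 * (Real.pi:ℂ) * Complex.I) := by
    push_cast; ring
  rw [this, Complex.exp_int_mul_two_pi_mul_I]

lemma ep_congr (p : ℕ) (hp : 0 < p) {a b : ℤ} (h : (p : ℤ) ∣ a - b) : ep p a = ep p b := by
  obtain ⟨k, hk⟩ := h
  have : a = b + (p:ℤ) * k := by linarith
  rw [this, ep_add, ep_pmul p hp, mul_one]

lemma ep_pow (p : ℕ) (c : ℤ) (b : ℕ) : ep p (c * b) = (ep p c) ^ b := by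
  unfold ep eChar
  rw [← Complex.exp_nat_mul]
  congr 1
  push_cast
  ring

lemma ep_sum (p : ℕ) (hp : p.Prime) (c : ℤ) :
    ∑ b ∈ range p, ep p (c * b) = if (p : ℤ) ∣ c then (p : ℂ) else 0 := by
  simp only [ep_pow]
  by_cases hd : (p : ℤ) ∣ c
  · obtain ⟨k, rfl⟩ := hd
    rw [if_pos ⟨k, rfl⟩]
    simp [ep_pmul p hp.pos]
  · rw [if_neg hd]
    have hx1 : ep p c ≠ 1 := by
      intro h1
      apply hd
      unfold ep eChar at h1
      rw [Complex.exp_eq_one_iff] at h1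
      obtain ⟨n, hn⟩ := h1
      have h2πI : (2 * (Real.pi : ℂ) * Complex.I) ≠ 0 := by
        simp [Real.pi_ne_zero, Complex.I_ne_zero]
      have hpc : ((p:ℝ):ℂ) ≠ 0 := by
        simp [hp.ne_zero]
      have hc : (((c : ℝ) / p : ℝ) : ℂ) = (n : ℂ) := by
        have := hn
        rw [mul_comm (n:ℂ)] at this
        exact mul_left_cancel₀ h2πI this
      have hpc2 : ((p:ℕ):ℂ) ≠ 0 := by simp [hp.ne_zero]
      have hc2 : (c : ℂ) = (n : ℂ) * p := by
        push_cast at hc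
        rw [div_eq_iff hpc2] at hc
        exact hc
      have hc3 : c = n * p := by exact_mod_cast hc2
      exact ⟨n, by linarith⟩
    rw [geom_sum_eq hx1]
    rw [← ep_pow, mul_comm, ep_pmul p hp.pos]
    simp

section helpers
variable {p : ℕ}

lemma intMod_iff (p : ℕ) (x y : ℤ) :
    x % (p : ℤ) = y % (p : ℤ) ↔ ((x : ZMod p) = (y : ZMod p)) :=
  (ZMod.intCast_eq_intCast_iff x y p).symm

lemma indicator_sum (p : ℕ) [NeZero p] (a : ZMod p) (t : ℂ) :
    ∑ z ∈ range p, (if ((z : ℕ) : ZMod p) = a then t else 0) = t := by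
  rw [Finset.sum_eq_single_of_mem a.val (mem_range.2 (ZMod.val_lt a))]
  · rw [if_pos (ZMod.natCast_rightInverse a)]
  · intro b hb hne
    rw [if_neg]
    intro h
    exact hne (by rw [← h, ZMod.val_cast_of_lt (mem_range.mp hb)])

lemma gcd_eq_one_iff (hp : p.Prime) (z : ℕ) : Nat.gcd z p = 1 ↔ ¬ p ∣ z := by
  constructor
  · intro h hd
    have h2 : p ∣ Nat.gcd z p := Nat.dvd_gcd hd dvd_rfl
    rw [h] at h2
    exact hp.one_lt.ne' (Nat.eq_one_of_dvd_one h2)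
  · intro h
    exact (Nat.coprime_comm.mp (hp.coprime_iff_not_dvd.mpr h))

end helpers

section counting
variable {p : ℕ}

lemma count_yz (hp : p.Prime) (b c : ℕ) (h : Nat.gcd (Nat.gcd b c) p = 1) (t : ℂ) :
    ∑ y ∈ range p, ∑ z ∈ range p,
      (if ((y : ℤ) * (b : ℤ) + (z : ℤ) * (c : ℤ)) % (p : ℤ) = 1 % (p : ℤ) then t else 0)
      = (p : ℂ) * t := by
  haveI : Fact p.Prime := ⟨hp⟩
  haveI : NeZero p := ⟨hp.ne_zero⟩
  have key : ∀ y z : ℕ,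
      (((y : ℤ) * (b : ℤ) + (z : ℤ) * (c : ℤ)) % (p : ℤ) = 1 % (p : ℤ)) ↔
      ((y : ZMod p) * (b : ZMod p) + (z : ZMod p) * (c : ZMod p) = 1) := by
    intro y z
    rw [intMod_iff]
    constructor
    · intro h2; push_cast at h2; exact_mod_cast h2
    · intro h2; push_cast; exact_mod_cast h2
  by_cases hc : (c : ZMod p) = 0
  · -- then b is a unit
    have hb : (b : ZMod p) ≠ 0 := by
      intro hb0
      have hpb : p ∣ b := (ZMod.natCast_eq_zero_iff b p).mp hb0
      have hpc : p ∣ c := (ZMod.natCast_eq_zero_iff c p).mp hc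
      have h2 : p ∣ Nat.gcd (Nat.gcd b c) p := Nat.dvd_gcd (Nat.dvd_gcd hpb hpc) dvd_rfl
      rw [h] at h2
      exact hp.one_lt.ne' (Nat.eq_one_of_dvd_one h2)
    have key2 : ∀ y z : ℕ,
        (((y : ℤ) * (b : ℤ) + (z : ℤ) * (c : ℤ)) % (p : ℤ) = 1 % (p : ℤ)) ↔
        ((y : ZMod p) = (b : ZMod p)⁻¹) := by
      intro y z
      rw [key y z, hc, mul_zero, add_zero]
      constructor
      · intro h2
        have := congrArg (fun w => w * (b : ZMod p)⁻¹) h2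
        simpa [mul_assoc, mul_inv_cancel₀ hb] using this
      · intro h2
        rw [h2, inv_mul_cancel₀ hb]
    calc ∑ y ∈ range p, ∑ z ∈ range p,
          (if ((y : ℤ) * (b : ℤ) + (z : ℤ) * (c : ℤ)) % (p : ℤ) = 1 % (p : ℤ) then t else 0)
        = ∑ y ∈ range p, ∑ _z ∈ range p, (if ((y:ℕ) : ZMod p) = (b : ZMod p)⁻¹ then t else 0) := by
          refine Finset.sum_congr rfl fun y _ => Finset.sum_congr rfl fun z _ => ?_
          exact if_congr (key2 y z) rfl rfl
      _ = ∑ y ∈ range p, (p : ℂ) * (if ((y:ℕ) : ZMod p) = (b : ZMod p)⁻¹ then t else 0) := by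
          refine Finset.sum_congr rfl fun y _ => ?_
          rw [Finset.sum_const, card_range, nsmul_eq_mul]
      _ = (p : ℂ) * t := by
          rw [← Finset.mul_sum, indicator_sum p ((b : ZMod p)⁻¹) t]
  · -- c is a unit
    calc ∑ y ∈ range p, ∑ z ∈ range p,
          (if ((y : ℤ) * (b : ℤ) + (z : ℤ) * (c : ℤ)) % (p : ℤ) = 1 % (p : ℤ) then t else 0)
        = ∑ _y ∈ range p, t := by
          refine Finset.sum_congr rfl fun y _ => ?_
          have key3 : ∀ z : ℕ,
              (((y : ℤ) * (b : ℤ) + (z : ℤ) * (c : ℤ)) % (p : ℤ) = 1 % (p : ℤ)) ↔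
              (((z:ℕ) : ZMod p) = (1 - (y : ZMod p) * b) * (c : ZMod p)⁻¹) := by
            intro z
            rw [key y z]
            constructor
            · intro h2
              have h3 : (z : ZMod p) * c = 1 - (y : ZMod p) * b := by
                linear_combination h2
              have := congrArg (fun w => w * (c : ZMod p)⁻¹) h3
              simpa [mul_assoc, mul_inv_cancel₀ hc] using this
            · intro h2
              rw [h2, mul_assoc, inv_mul_cancel₀ hc, mul_one]
              ring
          calc ∑ z ∈ range p,
                (if ((y : ℤ) * (b : ℤ) + (z : ℤ) * (c : ℤ)) % (p : ℤ) = 1 % (p : ℤ) then t else 0)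
              = ∑ z ∈ range p,
                (if ((z:ℕ) : ZMod p) = (1 - (y : ZMod p) * b) * (c : ZMod p)⁻¹ then t else 0) := by
                refine Finset.sum_congr rfl fun z _ => if_congr (key3 z) rfl rfl
            _ = t := indicator_sum p _ t
      _ = (p : ℂ) * t := by rw [Finset.sum_const, card_range, nsmul_eq_mul]

end counting

section collapse
variable {p : ℕ}

lemma collapse_yz (hp : p.Prime) (A B D : Prop) [Decidable A] [Decidable B] [Decidable D]
    (b c : ℕ) (t : ℂ) :
    (∑ y ∈ range p, ∑ z ∈ range p,
      if A ∧ B ∧ Nat.gcd (Nat.gcd b c) p = 1 ∧ D ∧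
         ((y : ℤ) * (b : ℤ) + (z : ℤ) * (c : ℤ)) % (p : ℤ) = 1 % (p : ℤ) then t else 0)
    = (p : ℂ) * (if A ∧ B ∧ Nat.gcd (Nat.gcd b c) p = 1 ∧ D then t else 0) := by
  by_cases h : A ∧ B ∧ Nat.gcd (Nat.gcd b c) p = 1 ∧ D
  · obtain ⟨hA, hB, hG, hD⟩ := h
    rw [if_pos ⟨hA, hB, hG, hD⟩]
    rw [← count_yz hp b c hG t]
    refine Finset.sum_congr rfl fun y _ => Finset.sum_congr rfl fun z _ => ?_
    refine if_congr ?_ rfl rfl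
    constructor
    · exact fun h2 => h2.2.2.2.2
    · exact fun h2 => ⟨hA, hB, hG, hD, h2⟩
  · rw [if_neg h, mul_zero]
    refine Finset.sum_eq_zero fun y _ => Finset.sum_eq_zero fun z _ => ?_
    exact if_neg (fun h2 => h ⟨h2.1, h2.2.1, h2.2.2.1, h2.2.2.2.1⟩)

lemma collapse_c2 (hp : p.Prime) (D : Prop) [Decidable D] (b2 c1 : ℕ) (hc1 : c1 < p) (t : ℂ) :
    (∑ c2 ∈ range p,
      if ((p : ℤ) * (c2 : ℤ) + (p : ℤ) * (c1 : ℤ)) % ((p : ℤ) * (p : ℤ)) = 0 ∧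
         Nat.gcd c1 p = 1 ∧ Nat.gcd (Nat.gcd b2 c2) p = 1 ∧ D then t else 0)
    = if Nat.gcd c1 p = 1 ∧ D then t else 0 := by
  have hp0 : ((p:ℤ)) ≠ 0 := by exact_mod_cast hp.ne_zero
  have hK : ∀ c2 : ℕ, c2 < p → Nat.gcd c1 p = 1 →
      ((((p : ℤ) * (c2 : ℤ) + (p : ℤ) * (c1 : ℤ)) % ((p : ℤ) * (p : ℤ)) = 0) ↔ c2 + c1 = p) := by
    intro c2 hc2 hg1
    have hc1pos : 0 < c1 := by
      rcases Nat.eq_zero_or_pos c1 with h0 | h0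
      · subst h0; simp [Nat.gcd_zero_left] at hg1; exact absurd hg1 hp.one_lt.ne'
      · exact h0
    constructor
    · intro hmod
      have hdvd : (p:ℤ) * (p:ℤ) ∣ (p:ℤ) * (c2 : ℤ) + (p:ℤ) * (c1 : ℤ) :=
        Int.dvd_of_emod_eq_zero hmod
      rw [← mul_add] at hdvd
      have hd2 : (p:ℤ) ∣ ((c2:ℤ) + (c1:ℤ)) := (mul_dvd_mul_iff_left hp0).mp hdvd
      have hd3 : p ∣ (c2 + c1) := by exact_mod_cast hd2
      exact Nat.eq_of_dvd_of_lt_two_mul (by omega) hd3 (by omega)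
    · intro heq
      have h2 : (p:ℤ) * (c2 : ℤ) + (p:ℤ) * (c1 : ℤ) = (p:ℤ) * (p:ℤ) := by
        rw [← mul_add]
        congr 1
        exact_mod_cast heq
      rw [h2, Int.emod_self]
  by_cases h : Nat.gcd c1 p = 1 ∧ D
  · obtain ⟨hg, hD⟩ := h
    have hc1pos : 0 < c1 := by
      rcases Nat.eq_zero_or_pos c1 with h0 | h0
      · subst h0; simp [Nat.gcd_zero_left] at hg; exact absurd hg hp.one_lt.ne'
      · exact h0
    rw [if_pos ⟨hg, hD⟩]
    rw [Finset.sum_eq_single_of_mem (p - c1) (mem_range.2 (by omega))]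
    · rw [if_pos]
      refine ⟨?_, hg, ?_, hD⟩
      · rw [hK (p - c1) (by omega) hg]; omega
      · rw [gcd_eq_one_iff hp]
        intro hd
        have h5 : p ∣ p - c1 := dvd_trans hd (Nat.gcd_dvd_right _ _)
        have h6 := Nat.eq_zero_of_dvd_of_lt h5 (by omega)
        omega
    · intro b hb hne
      rw [if_neg]
      rintro ⟨hKk, -, -, -⟩
      rw [hK b (mem_range.mp hb) hg] at hKk
      exact hne (by omega)
  · rw [if_neg h]
    refine Finset.sum_eq_zero fun c2 _ => if_neg fun h2 => h ⟨h2.2.1, h2.2.2.2⟩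

lemma collapse_b2 (hp : p.Prime) (C : Prop) [Decidable C] (c : ℤ) :
    (∑ b ∈ range p, if C then ep p (c * b) else 0)
    = if C then (if (p : ℤ) ∣ c then (p : ℂ) else 0) else 0 := by
  by_cases hC : C
  · simp only [if_pos hC]
    exact ep_sum p hp c
  · simp only [if_neg hC, Finset.sum_const_zero]

lemma pair_c1z1 (hp : p.Prime) (h : ℕ → ℂ) :
    (∑ c1 ∈ range p, ∑ z1 ∈ range p,
      (if Nat.gcd c1 p = 1 ∧ ((z1 : ℤ) * (c1 : ℤ)) % (p : ℤ) = 1 % (p : ℤ) then h z1 else 0))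
    = ∑ z1 ∈ range p, (if Nat.gcd z1 p = 1 then h z1 else 0) := by
  haveI : Fact p.Prime := ⟨hp⟩
  haveI : NeZero p := ⟨hp.ne_zero⟩
  rw [Finset.sum_comm]
  refine Finset.sum_congr rfl fun z hz => ?_
  have hzc : ∀ c1 : ℕ, (((z : ℤ) * (c1 : ℤ)) % (p : ℤ) = 1 % (p : ℤ)) ↔
      ((z : ZMod p) * (c1 : ZMod p) = 1) := by
    intro c1
    rw [intMod_iff]
    constructor
    · intro h2; push_cast at h2; exact_mod_cast h2
    · intro h2; push_cast; exact_mod_cast h2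
  by_cases hzu : Nat.gcd z p = 1
  · rw [if_pos hzu]
    have hz0 : (z : ZMod p) ≠ 0 := by
      intro h0
      exact (gcd_eq_one_iff hp z).mp hzu ((ZMod.natCast_eq_zero_iff z p).mp h0)
    rw [Finset.sum_eq_single_of_mem ((z : ZMod p)⁻¹).val
        (mem_range.2 (ZMod.val_lt _))]
    · rw [if_pos]
      constructor
      · rw [gcd_eq_one_iff hp]
        intro hd
        have h0 : ((((z : ZMod p)⁻¹).val : ℕ) : ZMod p) = 0 :=
          (ZMod.natCast_eq_zero_iff _ p).mpr hd
        rw [ZMod.natCast_rightInverse] at h0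
        exact inv_ne_zero hz0 h0
      · rw [hzc]
        rw [ZMod.natCast_rightInverse]
        exact mul_inv_cancel₀ hz0
    · intro b hb hne
      rw [if_neg]
      rintro ⟨-, hb2⟩
      rw [hzc] at hb2
      apply hne
      have h3 : (b : ZMod p) = (z : ZMod p)⁻¹ := by
        have := congrArg (fun w => (z : ZMod p)⁻¹ * w) hb2
        simpa [← mul_assoc, inv_mul_cancel₀ hz0] using this
      rw [← h3, ZMod.val_cast_of_lt (mem_range.mp hb)]
  · rw [if_neg hzu]
    refine Finset.sum_eq_zero fun c1 _ => ?_
    rw [if_neg]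
    rintro ⟨-, h2⟩
    rw [hzc] at h2
    have hdz : p ∣ z := by
      by_contra hnd
      exact hzu (Nat.coprime_comm.mp (hp.coprime_iff_not_dvd.mpr hnd))
    have h0 : (z : ZMod p) = 0 := (ZMod.natCast_eq_zero_iff z p).mpr hdz
    rw [h0, zero_mul] at h2
    exact zero_ne_one h2

end collapse

section ram
variable {p : ℕ}

lemma ram_eq (hp : p.Prime) (n : ℤ) :
    ramanujanSum p n = if (p : ℤ) ∣ n then (p : ℂ) - 1 else -1 := by
  unfold ramanujanSum
  have h1 : ∀ a ∈ range p,
      (if Nat.gcd a p = 1 then eChar ((a : ℝ) * (n : ℝ) / p) else 0)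
      = ep p (n * a) - (if a = 0 then 1 else 0) := by
    intro a ha
    by_cases h0 : a = 0
    · subst h0
      rw [if_neg, if_pos rfl]
      · rw [Nat.cast_zero, mul_zero, ep_zero]; ring
      · rw [Nat.gcd_zero_left]; exact hp.one_lt.ne'
    · rw [if_pos, if_neg h0, sub_zero]
      · unfold ep eChar
        congr 2
        push_cast
        ring
      · exact (gcd_eq_one_iff hp a).mpr fun hd => h0 (Nat.eq_zero_of_dvd_of_lt hd (mem_range.mp ha))
  rw [Finset.sum_congr rfl h1, Finset.sum_sub_distrib, ep_sum p hp n]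
  have h2 : (∑ a ∈ range p, (if a = 0 then (1:ℂ) else 0)) = 1 := by
    rw [Finset.sum_ite_eq' (range p) 0 (fun _ => (1:ℂ)), if_pos (mem_range.2 hp.pos)]
  rw [h2]
  by_cases hd : (p : ℤ) ∣ n
  · rw [if_pos hd, if_pos hd]
  · rw [if_neg hd, if_neg hd]; ring

lemma sum_units (hp : p.Prime) (c : ℂ) :
    ∑ z ∈ range p, (if Nat.gcd z p = 1 then c else 0) = ((p : ℂ) - 1) * c := by
  have h1 : ∀ z ∈ range p,
      (if Nat.gcd z p = 1 then c else 0) = c - (if z = 0 then c else 0) := by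
    intro z hz
    by_cases h0 : z = 0
    · subst h0
      rw [if_neg, if_pos rfl]
      · ring
      · rw [Nat.gcd_zero_left]; exact hp.one_lt.ne'
    · rw [if_pos, if_neg h0, sub_zero]
      exact (gcd_eq_one_iff hp z).mpr fun hd => h0 (Nat.eq_zero_of_dvd_of_lt hd (mem_range.mp hz))
  rw [Finset.sum_congr rfl h1, Finset.sum_sub_distrib, Finset.sum_const, card_range,
    Finset.sum_ite_eq' (range p) 0 (fun _ => c), if_pos (mem_range.2 hp.pos), nsmul_eq_mul]
  ring

lemma T_eq (hp : p.Prime) (m1 n2 : ℤ) :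
    (∑ z ∈ range p, (if Nat.gcd z p = 1 then
        (if (p : ℤ) ∣ (n2 - m1 * z) then (p : ℂ) else 0) else 0))
    = ((p : ℂ) - 1) + (if (p : ℤ) ∣ m1 then (p : ℂ) - 1 else -1) *
        (if (p : ℤ) ∣ n2 then (p : ℂ) - 1 else -1) := by
  haveI : Fact p.Prime := ⟨hp⟩
  haveI : NeZero p := ⟨hp.ne_zero⟩
  have hpi : Prime (p : ℤ) := Nat.prime_iff_prime_int.mp hp
  by_cases hm : (p : ℤ) ∣ m1
  · have key : ∀ z : ℕ, ((p : ℤ) ∣ (n2 - m1 * z)) ↔ ((p : ℤ) ∣ n2) := by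
      intro z
      constructor
      · intro h
        have := dvd_add h (hm.mul_right (z : ℤ))
        simpa using this
      · intro h
        exact dvd_sub h (hm.mul_right (z : ℤ))
    by_cases hn : (p : ℤ) ∣ n2
    · rw [if_pos hm, if_pos hn]
      have : ∀ z ∈ range p, (if Nat.gcd z p = 1 then
          (if (p : ℤ) ∣ (n2 - m1 * z) then (p : ℂ) else 0) else 0)
          = (if Nat.gcd z p = 1 then (p : ℂ) else 0) := by
        intro z _
        by_cases hg : Nat.gcd z p = 1 <;> simp [hg, (key z).mpr hn]
      rw [Finset.sum_congr rfl this, sum_units hp]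
      ring
    · rw [if_pos hm, if_neg hn]
      have : ∀ z ∈ range p, (if Nat.gcd z p = 1 then
          (if (p : ℤ) ∣ (n2 - m1 * z) then (p : ℂ) else 0) else 0) = 0 := by
        intro z _
        have : ¬ (p : ℤ) ∣ (n2 - m1 * z) := fun h => hn ((key z).mp h)
        by_cases hg : Nat.gcd z p = 1 <;> simp [hg, this]
      rw [Finset.sum_eq_zero this]
      ring
  · by_cases hn : (p : ℤ) ∣ n2
    · rw [if_neg hm, if_pos hn]
      have : ∀ z ∈ range p, (if Nat.gcd z p = 1 then
          (if (p : ℤ) ∣ (n2 - m1 * z) then (p : ℂ) else 0) else 0) = 0 := by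
        intro z _
        by_cases hg : Nat.gcd z p = 1
        · have hnd : ¬ (p : ℤ) ∣ (n2 - m1 * z) := by
            intro h
            have h2 : (p : ℤ) ∣ m1 * z := by
              have := dvd_sub hn h
              simpa using this
            rcases hpi.dvd_mul.mp h2 with h3 | h3
            · exact hm h3
            · have h4 : p ∣ z := by exact_mod_cast h3
              exact (gcd_eq_one_iff hp z).mp hg h4
          simp [hg, hnd]
        · simp [hg]
      rw [Finset.sum_eq_zero this]
      ring
    · rw [if_neg hm, if_neg hn]
      have hm0 : (m1 : ZMod p) ≠ 0 := fun h => hm ((ZMod.intCast_zmod_eq_zero_iff_dvd m1 p).mp h)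
      have hn0 : (n2 : ZMod p) ≠ 0 := fun h => hn ((ZMod.intCast_zmod_eq_zero_iff_dvd n2 p).mp h)
      set w : ZMod p := (m1 : ZMod p)⁻¹ * (n2 : ZMod p) with hw
      have hw0 : w ≠ 0 := mul_ne_zero (inv_ne_zero hm0) hn0
      have hdvd_iff : ∀ z : ℕ, ((p : ℤ) ∣ (n2 - m1 * z)) ↔ ((z : ZMod p) = w) := by
        intro z
        rw [← ZMod.intCast_zmod_eq_zero_iff_dvd]
        push_cast
        constructor
        · intro h
          have h2 : (m1 : ZMod p) * (z : ZMod p) = (n2 : ZMod p) := by linear_combination -h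
          rw [hw, ← h2]
          field_simp
        · intro h
          rw [h, hw]
          field_simp
          ring
      rw [Finset.sum_eq_single_of_mem w.val (mem_range.2 (ZMod.val_lt w))]
      · rw [if_pos, if_pos]
        · ring
        · rw [hdvd_iff, ZMod.natCast_rightInverse]
        · rw [gcd_eq_one_iff hp]
          intro hd
          have h0 : ((w.val : ℕ) : ZMod p) = 0 := (ZMod.natCast_eq_zero_iff _ p).mpr hd
          rw [ZMod.natCast_rightInverse] at h0
          exact hw0 h0
      · intro b hb hne
        by_cases hg : Nat.gcd b p = 1
        · rw [if_pos hg, if_neg]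
          rw [hdvd_iff]
          intro h
          exact hne (by rw [← h, ZMod.val_cast_of_lt (mem_range.mp hb)])
        · rw [if_neg hg]

end ram

lemma K3_eq (p : ℕ) (hp : p.Prime) (n1 n2 m1 m2 : ℤ) :
    Kloosterman3 p n1 n2 m1 m2 p p
    = ∑ z ∈ range p, (if Nat.gcd z p = 1 then
        (if (p : ℤ) ∣ (n2 - m1 * z) then (p : ℂ) else 0) else 0) := by
  unfold Kloosterman3
  rw [Finset.sum_eq_single_of_mem 0 (mem_range.2 hp.pos) (by
    intro b hb hb0
    have hpb : ¬ ((p:ℤ) ∣ (b:ℤ)) := by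
      intro hd
      exact hb0 (Nat.eq_zero_of_dvd_of_lt (by exact_mod_cast hd) (mem_range.mp hb))
    simp [hpb])]
  have hstep :
      (∑ C1 ∈ Finset.range p,
        ∑ Y1 ∈ Finset.range p,
          ∑ Z1 ∈ Finset.range p,
            ∑ B2 ∈ Finset.range p,
              ∑ C2 ∈ Finset.range p,
                ∑ Y2 ∈ Finset.range p,
                  ∑ Z2 ∈ Finset.range p,
                    if
                        ((p:ℤ) * ↑C2 + ↑(0:ℕ) * ↑B2 + ↑p * ↑C1) % (↑p * ↑p) = 0 ∧
                          (Nat.gcd 0 C1).gcd p = 1 ∧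
                            (B2.gcd C2).gcd p = 1 ∧
                              (p:ℤ) ∣ ↑(0:ℕ) ∧
                                ((Y1:ℤ) * ↑(0:ℕ) + ↑Z1 * ↑C1) % ↑p = 1 % ↑p ∧
                                  ((Y2:ℤ) * ↑B2 + ↑Z2 * ↑C2) % ↑p = 1 % ↑p then
                      eChar
                        (↑(n1 * ↑(0:ℕ) + m1 * ((Y1:ℤ) * ↑p - ↑Z1 * ↑B2)) / ↑p +
                          ↑(n2 * ↑B2 + m2 * ((Y2:ℤ) * ↑p - ↑Z2 * ↑(0:ℕ))) / ↑p)
                    else 0)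
      = (p:ℂ) * ((p:ℂ) * ∑ z ∈ Finset.range p, (if Nat.gcd z p = 1 then
          (if (p : ℤ) ∣ (n2 - m1 * z) then (p : ℂ) else 0) else 0)) := by
    calc (∑ C1 ∈ Finset.range p,
        ∑ Y1 ∈ Finset.range p,
          ∑ Z1 ∈ Finset.range p,
            ∑ B2 ∈ Finset.range p,
              ∑ C2 ∈ Finset.range p,
                ∑ Y2 ∈ Finset.range p,
                  ∑ Z2 ∈ Finset.range p,
                    if
                        ((p:ℤ) * ↑C2 + ↑(0:ℕ) * ↑B2 + ↑p * ↑C1) % (↑p * ↑p) = 0 ∧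
                          (Nat.gcd 0 C1).gcd p = 1 ∧
                            (B2.gcd C2).gcd p = 1 ∧
                              (p:ℤ) ∣ ↑(0:ℕ) ∧
                                ((Y1:ℤ) * ↑(0:ℕ) + ↑Z1 * ↑C1) % ↑p = 1 % ↑p ∧
                                  ((Y2:ℤ) * ↑B2 + ↑Z2 * ↑C2) % ↑p = 1 % ↑p then
                      eChar
                        (↑(n1 * ↑(0:ℕ) + m1 * ((Y1:ℤ) * ↑p - ↑Z1 * ↑B2)) / ↑p +
                          ↑(n2 * ↑B2 + m2 * ((Y2:ℤ) * ↑p - ↑Z2 * ↑(0:ℕ))) / ↑p)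
                    else 0)
        = ∑ C1 ∈ Finset.range p, ∑ Y1 ∈ Finset.range p, ∑ Z1 ∈ Finset.range p,
            ∑ B2 ∈ Finset.range p, ∑ C2 ∈ Finset.range p, ∑ Y2 ∈ Finset.range p,
              ∑ Z2 ∈ Finset.range p,
              if ((p:ℤ) * (C2:ℤ) + (p:ℤ) * (C1:ℤ)) % ((p:ℤ) * (p:ℤ)) = 0 ∧
                 Nat.gcd C1 p = 1 ∧
                 Nat.gcd (Nat.gcd B2 C2) p = 1 ∧
                 ((Z1:ℤ) * (C1:ℤ)) % (p:ℤ) = 1 % (p:ℤ) ∧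
                 ((Y2:ℤ) * (B2:ℤ) + (Z2:ℤ) * (C2:ℤ)) % (p:ℤ) = 1 % (p:ℤ)
              then ep p ((n2 - m1 * (Z1:ℤ)) * (B2:ℕ)) else 0 := by
          refine Finset.sum_congr rfl fun C1 _ => Finset.sum_congr rfl fun Y1 _ =>
            Finset.sum_congr rfl fun Z1 _ => Finset.sum_congr rfl fun B2 _ =>
            Finset.sum_congr rfl fun C2 _ => Finset.sum_congr rfl fun Y2 _ =>
            Finset.sum_congr rfl fun Z2 _ => ?_
          refine if_congr (by simp) ?_ rfl
          have e1 : eChar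
                (↑(n1 * ↑(0:ℕ) + m1 * ((Y1:ℤ) * ↑p - ↑Z1 * ↑B2)) / ↑p +
                  ↑(n2 * ↑B2 + m2 * ((Y2:ℤ) * ↑p - ↑Z2 * ↑(0:ℕ))) / ↑p)
              = ep p ((n1 * ↑(0:ℕ) + m1 * ((Y1:ℤ) * ↑p - ↑Z1 * ↑B2)) +
                  (n2 * ↑B2 + m2 * ((Y2:ℤ) * ↑p - ↑Z2 * ↑(0:ℕ)))) := by
            unfold ep eChar
            congr 1
            push_cast
            ring
          rw [e1]
          apply ep_congr p hp.pos
          exact ⟨m1 * Y1 + m2 * Y2, by push_cast; ring⟩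
      _ = ∑ C1 ∈ Finset.range p, ∑ Y1 ∈ Finset.range p, ∑ Z1 ∈ Finset.range p,
            ∑ B2 ∈ Finset.range p, ∑ C2 ∈ Finset.range p,
            (p:ℂ) * (if ((p:ℤ) * (C2:ℤ) + (p:ℤ) * (C1:ℤ)) % ((p:ℤ) * (p:ℤ)) = 0 ∧
                 Nat.gcd C1 p = 1 ∧
                 Nat.gcd (Nat.gcd B2 C2) p = 1 ∧
                 ((Z1:ℤ) * (C1:ℤ)) % (p:ℤ) = 1 % (p:ℤ)
              then ep p ((n2 - m1 * (Z1:ℤ)) * (B2:ℕ)) else 0) := by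
          refine Finset.sum_congr rfl fun C1 _ => Finset.sum_congr rfl fun Y1 _ =>
            Finset.sum_congr rfl fun Z1 _ => Finset.sum_congr rfl fun B2 _ =>
            Finset.sum_congr rfl fun C2 _ => ?_
          exact collapse_yz hp _ _ _ B2 C2 _
      _ = ∑ C1 ∈ Finset.range p, ∑ Y1 ∈ Finset.range p, ∑ Z1 ∈ Finset.range p,
            ∑ B2 ∈ Finset.range p,
            (p:ℂ) * (if Nat.gcd C1 p = 1 ∧ ((Z1:ℤ) * (C1:ℤ)) % (p:ℤ) = 1 % (p:ℤ)
              then ep p ((n2 - m1 * (Z1:ℤ)) * (B2:ℕ)) else 0) := by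
          refine Finset.sum_congr rfl fun C1 hC1 => Finset.sum_congr rfl fun Y1 _ =>
            Finset.sum_congr rfl fun Z1 _ => Finset.sum_congr rfl fun B2 _ => ?_
          rw [← Finset.mul_sum]
          congr 1
          exact collapse_c2 hp _ B2 C1 (mem_range.mp hC1) _
      _ = ∑ C1 ∈ Finset.range p, ∑ Y1 ∈ Finset.range p, ∑ Z1 ∈ Finset.range p,
            (p:ℂ) * (if Nat.gcd C1 p = 1 ∧ ((Z1:ℤ) * (C1:ℤ)) % (p:ℤ) = 1 % (p:ℤ)
              then (if (p:ℤ) ∣ (n2 - m1 * (Z1:ℤ)) then (p:ℂ) else 0) else 0) := by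
          refine Finset.sum_congr rfl fun C1 _ => Finset.sum_congr rfl fun Y1 _ =>
            Finset.sum_congr rfl fun Z1 _ => ?_
          rw [← Finset.mul_sum]
          congr 1
          exact collapse_b2 hp _ _
      _ = ∑ C1 ∈ Finset.range p,
            (p:ℂ) * ((p:ℂ) * ∑ Z1 ∈ Finset.range p,
              (if Nat.gcd C1 p = 1 ∧ ((Z1:ℤ) * (C1:ℤ)) % (p:ℤ) = 1 % (p:ℤ)
                then (if (p:ℤ) ∣ (n2 - m1 * (Z1:ℤ)) then (p:ℂ) else 0) else 0)) := by
          refine Finset.sum_congr rfl fun C1 _ => ?_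
          rw [Finset.sum_congr rfl (fun Y1 _ => (Finset.mul_sum _ _ _).symm),
            Finset.sum_const, card_range, nsmul_eq_mul]
      _ = (p:ℂ) * ((p:ℂ) * ∑ C1 ∈ Finset.range p, ∑ Z1 ∈ Finset.range p,
              (if Nat.gcd C1 p = 1 ∧ ((Z1:ℤ) * (C1:ℤ)) % (p:ℤ) = 1 % (p:ℤ)
                then (if (p:ℤ) ∣ (n2 - m1 * (Z1:ℤ)) then (p:ℂ) else 0) else 0)) := by
          rw [← Finset.mul_sum, ← Finset.mul_sum]
      _ = (p:ℂ) * ((p:ℂ) * ∑ z ∈ Finset.range p, (if Nat.gcd z p = 1 then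
          (if (p : ℤ) ∣ (n2 - m1 * z) then (p : ℂ) else 0) else 0)) := by
          rw [pair_c1z1 hp (fun z1 => if (p:ℤ) ∣ (n2 - m1 * (z1:ℤ)) then (p:ℂ) else 0)]
  rw [hstep]
  have hpc : (p:ℂ) ≠ 0 := Nat.cast_ne_zero.mpr hp.ne_zero
  field_simp

theorem kloosterman3_level_p_p_p (p : ℕ) (hp : p.Prime) (n1 n2 m1 m2 : ℤ) :
    Kloosterman3 p n1 n2 m1 m2 p p = ((p : ℂ) - 1) + ramanujanSum p m1 * ramanujanSum p n2 ∧
    (((p : ℤ) ∣ m1 ∧ (p : ℤ) ∣ n2) →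
      Kloosterman3 p n1 n2 m1 m2 p p = (p : ℂ) * ((p : ℂ) - 1)) ∧
    (¬ (p : ℤ) ∣ m1 * n2 → Kloosterman3 p n1 n2 m1 m2 p p = (p : ℂ)) ∧
    (((p : ℤ) ∣ m1 * n2 ∧ ¬ ((p : ℤ) ∣ m1 ∧ (p : ℤ) ∣ n2)) →
      Kloosterman3 p n1 n2 m1 m2 p p = 0) := by
  have hpi : Prime (p : ℤ) := Nat.prime_iff_prime_int.mp hp
  have hkey : Kloosterman3 p n1 n2 m1 m2 p p
      = ((p : ℂ) - 1) + (if (p : ℤ) ∣ m1 then (p : ℂ) - 1 else -1) *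
          (if (p : ℤ) ∣ n2 then (p : ℂ) - 1 else -1) := by
    rw [K3_eq p hp n1 n2 m1 m2, T_eq hp m1 n2]
  refine ⟨?_, ?_, ?_, ?_⟩
  · rw [hkey, ram_eq hp m1, ram_eq hp n2]
  · rintro ⟨hm, hn⟩
    rw [hkey, if_pos hm, if_pos hn]
    ring
  · intro h
    have hm : ¬ (p : ℤ) ∣ m1 := fun hd => h (hd.mul_right n2)
    have hn : ¬ (p : ℤ) ∣ n2 := fun hd => h (hd.mul_left m1)
    rw [hkey, if_neg hm, if_neg hn]
    ring
  · rintro ⟨hmn, hnot⟩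
    rcases hpi.dvd_mul.mp hmn with hm | hn
    · have hn : ¬ (p : ℤ) ∣ n2 := fun hd => hnot ⟨hm, hd⟩
      rw [hkey, if_pos hm, if_neg hn]
      ring
    · have hm : ¬ (p : ℤ) ∣ m1 := fun hd => hnot ⟨hd, hn⟩
      rw [hkey, if_neg hm, if_pos hn]
      ring
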